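/- If p* > 0 maximizes ee(p) = W·log₂(1+pγ)/(p/ς + p_c) over p ≥ 0 with maximum value ee*, then p* = W·ς/(ee*·ln 2) − 1/γ. -/

import Mathlib

noncomputable def ee (W γ ς pc p : ℝ) : ℝ :=
  W * Real.logb 2 (1 + p * γ) / (p / ς + pc)

/-- If `p* > 0` maximizes the user EE over `[0, ∞)` with maximum value `ee*`,
then `p* = W ς / (ee* ln 2) - 1/γ`. -/
theorem ee_maximizer_formula (W γ ς pc pstar eestar : ℝ) (hW : 0 < W) (hγ : 0 < γ)
    (hς : 0 < ς) (hς1 : ς ≤ 1) (hpc : 0 < pc) (hpstar : 0 < pstar)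
    (hmax : ∀ p ∈ Set.Ici (0 : ℝ), ee W γ ς pc p ≤ ee W γ ς pc pstar)
    (heestar : eestar = ee W γ ς pc pstar) :
    pstar = W * ς / (eestar * Real.log 2) - 1 / γ := by
  have hL2 : (0:ℝ) < Real.log 2 := Real.log_pos one_lt_two
  have ha1 : (1:ℝ) < 1 + pstar * γ := by nlinarith
  have ha0 : (0:ℝ) < 1 + pstar * γ := by linarith
  have hL : 0 < Real.log (1 + pstar * γ) := Real.log_pos ha1
  have hD : 0 < pstar / ς + pc := by positivity
  set a := 1 + pstar * γ with ha
  set L := Real.log a with hLdef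
  set D := pstar / ς + pc with hDdef
  -- local max
  have hloc : IsLocalMax (ee W γ ς pc) pstar := by
    filter_upwards [eventually_gt_nhds hpstar] with p hp
    exact hmax p (le_of_lt hp)
  -- derivative
  have hder : HasDerivAt (ee W γ ς pc)
      ((W * (γ / a) / Real.log 2 * D - W * (L / Real.log 2) * (1/ς)) / D^2) pstar := by
    have h1 : HasDerivAt (fun p : ℝ => 1 + p * γ) γ pstar := by
      simpa using ((hasDerivAt_id pstar).mul_const γ).const_add 1
    have h2 : HasDerivAt (fun p : ℝ => Real.log (1 + p * γ)) (γ / a) pstar := by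
      have := h1.log (ne_of_gt ha0)
      simpa [div_eq_mul_inv, ha, mul_comm] using this
    have h3 : HasDerivAt (fun p : ℝ => W * (Real.log (1 + p * γ) / Real.log 2))
        (W * (γ / a) / Real.log 2) pstar := by
      simpa [mul_div_assoc] using (h2.div_const (Real.log 2)).const_mul W
    have h4 : HasDerivAt (fun p : ℝ => p / ς + pc) (1/ς) pstar := by
      simpa [div_eq_mul_inv, one_mul] using ((hasDerivAt_id pstar).div_const ς).add_const pc
    have h5 := h3.div h4 (ne_of_gt hD)
    have heq : ee W γ ς pc = fun p : ℝ => W * (Real.log (1 + p * γ) / Real.log 2) / (p / ς + pc) := by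
      funext p
      simp [ee, Real.logb, mul_div_assoc]
    rw [heq]
    exact h5
  have hd0 : deriv (ee W γ ς pc) pstar = 0 := hloc.deriv_eq_zero
  have key2 : W * γ * D * ς = a * (W * L) := by
    have h := hder.deriv
    rw [hd0] at h
    have hD2 : D^2 ≠ 0 := pow_ne_zero 2 (ne_of_gt hD)
    field_simp at h
    have h2 : (W * γ * D * ς - a * (W * L)) * Real.log 2 = 0 := by linear_combination (-Real.log 2) * h
    rcases mul_eq_zero.mp h2 with h3 | h3
    · linarith
    · exact absurd h3 (ne_of_gt hL2)
  have hee : eestar = W * (L / Real.log 2) / D := by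
    rw [heestar]
    simp [ee, Real.logb, ← ha, ← hDdef, mul_div_assoc]
    exact Or.inl rfl
  have hees : 0 < eestar := by
    rw [hee]; positivity
  rw [hee]
  have hγ' : γ ≠ 0 := ne_of_gt hγ
  have hL2' : Real.log 2 ≠ 0 := ne_of_gt hL2
  have hD' : D ≠ 0 := ne_of_gt hD
  have hL' : L ≠ 0 := ne_of_gt hL
  have hW' : W ≠ 0 := ne_of_gt hW
  field_simp
  linear_combination (-1) * (mul_left_cancel₀ hW' (by linear_combination key2 : W * (γ * D * ς) = W * (a * L))) + (-L) * ha
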